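/- For the selfadjoint block matrix T̃ = [[0, C],[C*, 0]] with C an operator on a finite-dimensional Hilbert space K, one has rank±(T̃) ≥ max{rank±(Re C), rank±(Im C)}. -/

import Mathlib

open Matrix Kronecker
open scoped ComplexOrder

noncomputable section

def IsPOVM {n : Type*} [Fintype n] [DecidableEq n] {m : ℕ}
    (A : Fin m → Matrix n n ℂ) : Prop :=
  (∀ x, (A x).PosSemidef) ∧ ∑ x, A x = 1

def IsState {n : Type*} [Fintype n] [DecidableEq n] (ρ : Matrix n n ℂ) : Prop :=
  ρ.PosSemidef ∧ ρ.trace = 1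

def IsPureState {n : Type*} [Fintype n] [DecidableEq n] (ρ : Matrix n n ℂ) : Prop :=
  ρ.IsHermitian ∧ ρ * ρ = ρ ∧ ρ.rank = 1

def Rspan {n : Type*} [Fintype n] [DecidableEq n] {ι : Type*}
    (A : ι → Matrix n n ℂ) : Submodule ℝ (Matrix n n ℂ) :=
  Submodule.span ℝ (Set.range A)

def RPerp {n : Type*} [Fintype n] [DecidableEq n] {m : ℕ}
    (A : Fin m → Matrix n n ℂ) : Set (Matrix n n ℂ) :=
  {T | T.IsHermitian ∧ ∀ S ∈ Rspan A, (S * T).trace = 0}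

def herm (n : Type*) [Fintype n] [DecidableEq n] : Submodule ℝ (Matrix n n ℂ) where
  carrier := {T | T.IsHermitian}
  add_mem' := fun h1 h2 => h1.add h2
  zero_mem' := Matrix.isHermitian_zero
  smul_mem' := fun c T h => by
    rw [Set.mem_setOf_eq, Matrix.IsHermitian, Matrix.conjTranspose_smul, star_trivial, h]

def hermPerp {n : Type*} [Fintype n] [DecidableEq n]
    (V : Submodule ℝ (Matrix n n ℂ)) : Submodule ℝ (Matrix n n ℂ) where
  carrier := {T | T.IsHermitian ∧ ∀ S ∈ V, (S * T).trace = 0}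
  add_mem' := fun h1 h2 => ⟨h1.1.add h2.1, fun S hS => by
    rw [mul_add, Matrix.trace_add, h1.2 S hS, h2.2 S hS, add_zero]⟩
  zero_mem' := ⟨Matrix.isHermitian_zero, fun S _ => by simp⟩
  smul_mem' := fun c T h => ⟨by
      rw [Matrix.IsHermitian, Matrix.conjTranspose_smul, star_trivial, h.1],
    fun S hS => by rw [Matrix.mul_smul, Matrix.trace_smul, h.2 S hS, smul_zero]⟩

def tensSub {nA nB : Type*} [Fintype nA] [DecidableEq nA] [Fintype nB] [DecidableEq nB]
    (U : Submodule ℝ (Matrix nA nA ℂ)) (V : Submodule ℝ (Matrix nB nB ℂ)) :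
    Submodule ℝ (Matrix (nA × nB) (nA × nB) ℂ) :=
  Submodule.span ℝ {T | ∃ S ∈ U, ∃ R ∈ V, T = S ⊗ₖ R}

noncomputable def rankPM {n : Type*} [Fintype n] [DecidableEq n]
    (T : Matrix n n ℂ) (hT : T.IsHermitian) : ℕ :=
  min (Finset.univ.filter fun i => 0 < hT.eigenvalues i).card
      (Finset.univ.filter fun i => hT.eigenvalues i < 0).card


section Aux
open Finset Module
set_option linter.unusedSectionVars false
variable {n : Type*} [Fintype n] [DecidableEq n]

lemma repr_vanish (b : OrthonormalBasis n ℂ (EuclideanSpace ℂ n)) (S : Finset n)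
    {x : EuclideanSpace ℂ n} (hx : x ∈ Submodule.span ℂ (b '' (S : Set n))) {j : n} (hj : j ∉ S) :
    b.repr x j = 0 := by
  rw [b.repr_apply_apply]
  have hle : Submodule.span ℂ (b '' (S : Set n)) ≤ LinearMap.ker ((innerSL ℂ (b j)).toLinearMap) := by
    rw [Submodule.span_le]
    rintro _ ⟨i, hi, rfl⟩
    simp only [SetLike.mem_coe, LinearMap.mem_ker, ContinuousLinearMap.coe_coe, innerSL_apply_apply]
    exact b.orthonormal.2 (fun h => hj (h ▸ hi))
  exact hle hx

lemma finrank_span_eigen (b : OrthonormalBasis n ℂ (EuclideanSpace ℂ n)) (S : Finset n) :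
    Module.finrank ℂ (Submodule.span ℂ (b '' (S : Set n))) = S.card := by
  have hli : LinearIndependent ℂ (fun i : S => b i) :=
    b.orthonormal.linearIndependent.comp _ Subtype.val_injective
  rw [show (b '' (S : Set n)) = Set.range (fun i : S => b i) by ext; simp]
  rw [finrank_span_eq_card hli]
  simp

lemma mulVec_expand (A : Matrix n n ℂ) (hA : A.IsHermitian) (y : EuclideanSpace ℂ n) :
    (WithLp.toLp 2 (A *ᵥ y) : EuclideanSpace ℂ n)
      = ∑ i, (hA.eigenvectorBasis.repr y i * (hA.eigenvalues i : ℂ)) • hA.eigenvectorBasis i := by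
  nth_rewrite 1 [← hA.eigenvectorBasis.sum_repr y]
  rw [WithLp.ofLp_sum, Matrix.mulVec_sum, WithLp.toLp_sum]
  refine Finset.sum_congr rfl fun i _ => ?_
  rw [WithLp.ofLp_smul, A.mulVec_smul, hA.mulVec_eigenvectorBasis]
  ext j
  simp only [WithLp.toLp_smul, PiLp.smul_apply, WithLp.toLp_ofLp, smul_eq_mul, Complex.real_smul]
  rw [Pi.smul_apply, Pi.smul_apply, smul_eq_mul, Complex.real_smul]
  ring

lemma quad_expand (A : Matrix n n ℂ) (hA : A.IsHermitian) (x : EuclideanSpace ℂ n) :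
    (inner ℂ x (WithLp.toLp 2 (A *ᵥ x) : EuclideanSpace ℂ n) : ℂ).re
      = ∑ i, hA.eigenvalues i * ‖hA.eigenvectorBasis.repr x i‖^2 := by
  have : (inner ℂ x (WithLp.toLp 2 (A *ᵥ x) : EuclideanSpace ℂ n) : ℂ)
      = ∑ i, ((hA.eigenvalues i * ‖hA.eigenvectorBasis.repr x i‖^2 : ℝ) : ℂ) := by
    rw [mulVec_expand A hA x, inner_sum]
    refine Finset.sum_congr rfl fun i _ => ?_
    have h2 : (inner ℂ x (hA.eigenvectorBasis i) : ℂ)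
        = starRingEnd ℂ (hA.eigenvectorBasis.repr x i) := by
      rw [hA.eigenvectorBasis.repr_apply_apply, inner_conj_symm]
    rw [inner_smul_right, h2, mul_comm, ← mul_assoc, Complex.conj_mul']
    push_cast
    ring
  rw [this]
  rw [← Complex.ofReal_sum]
  exact Complex.ofReal_re _

lemma le_count_pos (A : Matrix n n ℂ) (hA : A.IsHermitian)
    (W : Submodule ℂ (EuclideanSpace ℂ n))
    (hW : ∀ x ∈ W, x ≠ 0 → 0 < (inner ℂ x (WithLp.toLp 2 (A *ᵥ x) : EuclideanSpace ℂ n) : ℂ).re) :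
    finrank ℂ W ≤ (univ.filter fun i => 0 < hA.eigenvalues i).card := by
  by_contra hcon
  push_neg at hcon
  set b := hA.eigenvectorBasis with hb
  set S : Finset n := univ.filter (fun i => ¬ 0 < hA.eigenvalues i) with hS
  set V : Submodule ℂ (EuclideanSpace ℂ n) := Submodule.span ℂ (b '' (S : Set n)) with hVdef
  have hV : finrank ℂ V = S.card := finrank_span_eigen b S
  have hcard : (univ.filter fun i => 0 < hA.eigenvalues i).card + S.card = Fintype.card n := by
    simpa [hS, not_lt] using Finset.card_filter_add_card_filter_not
      (s := (univ : Finset n)) (p := fun i => 0 < hA.eigenvalues i)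
  have hdim : 0 < finrank ℂ ↥(W ⊓ V) := by
    have h1 := Submodule.finrank_sup_add_finrank_inf_eq W V
    have h2 : finrank ℂ ↥(W ⊔ V) ≤ Fintype.card n := by
      simpa [finrank_euclideanSpace] using Submodule.finrank_le (W ⊔ V)
    omega
  obtain ⟨x, hx0⟩ := finrank_pos_iff_exists_ne_zero.mp hdim
  have hxW : (x : EuclideanSpace ℂ n) ∈ W := x.2.1
  have hxV : (x : EuclideanSpace ℂ n) ∈ V := x.2.2
  have hx0' : (x : EuclideanSpace ℂ n) ≠ 0 := by
    simpa [Submodule.coe_eq_zero] using hx0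
  have hpos := hW x hxW hx0'
  rw [quad_expand A hA] at hpos
  have hle : ∑ i, hA.eigenvalues i * ‖b.repr x i‖^2 ≤ 0 := by
    apply Finset.sum_nonpos
    intro i _
    by_cases hi : 0 < hA.eigenvalues i
    · have : b.repr x i = 0 := repr_vanish b S hxV (by simp [hS, hi])
      simp [this]
    · exact mul_nonpos_of_nonpos_of_nonneg (not_lt.mp hi) (by positivity)
  linarith

lemma le_count_neg (A : Matrix n n ℂ) (hA : A.IsHermitian)
    (W : Submodule ℂ (EuclideanSpace ℂ n))
    (hW : ∀ x ∈ W, x ≠ 0 → (inner ℂ x (WithLp.toLp 2 (A *ᵥ x) : EuclideanSpace ℂ n) : ℂ).re < 0) :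
    finrank ℂ W ≤ (univ.filter fun i => hA.eigenvalues i < 0).card := by
  by_contra hcon
  push_neg at hcon
  set b := hA.eigenvectorBasis with hb
  set S : Finset n := univ.filter (fun i => ¬ hA.eigenvalues i < 0) with hS
  set V : Submodule ℂ (EuclideanSpace ℂ n) := Submodule.span ℂ (b '' (S : Set n)) with hVdef
  have hV : finrank ℂ V = S.card := finrank_span_eigen b S
  have hcard : (univ.filter fun i => hA.eigenvalues i < 0).card + S.card = Fintype.card n := by
    simpa [hS, not_lt] using Finset.card_filter_add_card_filter_not
      (s := (univ : Finset n)) (p := fun i => hA.eigenvalues i < 0)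
  have hdim : 0 < finrank ℂ ↥(W ⊓ V) := by
    have h1 := Submodule.finrank_sup_add_finrank_inf_eq W V
    have h2 : finrank ℂ ↥(W ⊔ V) ≤ Fintype.card n := by
      simpa [finrank_euclideanSpace] using Submodule.finrank_le (W ⊔ V)
    omega
  obtain ⟨x, hx0⟩ := finrank_pos_iff_exists_ne_zero.mp hdim
  have hxW : (x : EuclideanSpace ℂ n) ∈ W := x.2.1
  have hxV : (x : EuclideanSpace ℂ n) ∈ V := x.2.2
  have hx0' : (x : EuclideanSpace ℂ n) ≠ 0 := by
    simpa [Submodule.coe_eq_zero] using hx0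
  have hneg := hW x hxW hx0'
  rw [quad_expand A hA] at hneg
  have hge : 0 ≤ ∑ i, hA.eigenvalues i * ‖b.repr x i‖^2 := by
    apply Finset.sum_nonneg
    intro i _
    by_cases hi : hA.eigenvalues i < 0
    · have : b.repr x i = 0 := repr_vanish b S hxV (by simp [hS, hi])
      simp [this]
    · exact mul_nonneg (not_lt.mp hi) (by positivity)
  linarith

lemma exists_repr_ne_zero (b : OrthonormalBasis n ℂ (EuclideanSpace ℂ n))
    {x : EuclideanSpace ℂ n} (hx0 : x ≠ 0) : ∃ j, b.repr x j ≠ 0 := by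
  by_contra h
  push_neg at h
  apply hx0
  have : b.repr x = 0 := by ext j; exact h j
  simpa using b.repr.injective (by simpa using this)

lemma pos_on_span (A : Matrix n n ℂ) (hA : A.IsHermitian) {x : EuclideanSpace ℂ n}
    (hx : x ∈ Submodule.span ℂ
      (hA.eigenvectorBasis '' ((univ.filter fun i => 0 < hA.eigenvalues i) : Set n)))
    (hx0 : x ≠ 0) : 0 < (inner ℂ x (WithLp.toLp 2 (A *ᵥ x) : EuclideanSpace ℂ n) : ℂ).re := by
  rw [quad_expand A hA]
  have key : ∀ j, hA.eigenvectorBasis.repr x j ≠ 0 → 0 < hA.eigenvalues j := by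
    intro j hj
    by_contra hcon
    exact hj (repr_vanish _ _ hx (by simp [hcon]))
  apply Finset.sum_pos'
  · intro i _
    by_cases hi : hA.eigenvectorBasis.repr x i = 0
    · simp [hi]
    · exact mul_nonneg (key i hi).le (by positivity)
  · obtain ⟨j, hj⟩ := exists_repr_ne_zero hA.eigenvectorBasis hx0
    exact ⟨j, Finset.mem_univ j, mul_pos (key j hj) (pow_pos (norm_pos_iff.mpr hj) 2)⟩

lemma neg_on_span (A : Matrix n n ℂ) (hA : A.IsHermitian) {x : EuclideanSpace ℂ n}
    (hx : x ∈ Submodule.span ℂ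
      (hA.eigenvectorBasis '' ((univ.filter fun i => hA.eigenvalues i < 0) : Set n)))
    (hx0 : x ≠ 0) : (inner ℂ x (WithLp.toLp 2 (A *ᵥ x) : EuclideanSpace ℂ n) : ℂ).re < 0 := by
  rw [quad_expand A hA]
  have key : ∀ j, hA.eigenvectorBasis.repr x j ≠ 0 → hA.eigenvalues j < 0 := by
    intro j hj
    by_contra hcon
    exact hj (repr_vanish _ _ hx (by simp [hcon]))
  have : 0 < ∑ i, -(hA.eigenvalues i * ‖hA.eigenvectorBasis.repr x i‖^2) := by
    apply Finset.sum_pos'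
    · intro i _
      by_cases hi : hA.eigenvectorBasis.repr x i = 0
      · simp [hi]
      · simp only [neg_nonneg]
        exact mul_nonpos_of_nonpos_of_nonneg (key i hi).le (by positivity)
    · obtain ⟨j, hj⟩ := exists_repr_ne_zero hA.eigenvectorBasis hx0
      refine ⟨j, Finset.mem_univ j, ?_⟩
      simp only [neg_pos]
      exact mul_neg_of_neg_of_pos (key j hj) (pow_pos (norm_pos_iff.mpr hj) 2)
  rw [Finset.sum_neg_distrib] at this
  linarith

end Aux

section Glue
open Finset Module

noncomputable def toEuc {k : ℕ} (f : Fin k ⊕ Fin k → ℂ) : EuclideanSpace ℂ (Fin k ⊕ Fin k) := WithLp.toLp 2 f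

noncomputable def sumLift {k : ℕ} (c : ℂ) :
    EuclideanSpace ℂ (Fin k) →ₗ[ℂ] EuclideanSpace ℂ (Fin k ⊕ Fin k) where
  toFun v := WithLp.toLp 2 (Sum.elim (v : Fin k → ℂ) (c • (v : Fin k → ℂ)))
  map_add' u v := by
    ext (i | i)
    · rfl
    · show c * (u i + v i) = c * u i + c * v i
      ring
  map_smul' a v := by
    ext (i | i)
    · rfl
    · show c * (a * v i) = a * (c * v i)
      ring

lemma sumLift_injective {k : ℕ} (c : ℂ) : Function.Injective (sumLift (k := k) c) := by
  intro u v h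
  ext i
  exact congrArg (fun w : EuclideanSpace ℂ (Fin k ⊕ Fin k) => w (Sum.inl i)) h

lemma sumLift_eq {k : ℕ} (c : ℂ) (v : EuclideanSpace ℂ (Fin k)) :
    sumLift c v = toEuc (Sum.elim (v : Fin k → ℂ) (c • (v : Fin k → ℂ))) := rfl

lemma inner_sumElim {k : ℕ} (a b c d : EuclideanSpace ℂ (Fin k)) :
    (inner ℂ (toEuc (Sum.elim (a : Fin k → ℂ) (b : Fin k → ℂ)))
        (toEuc (Sum.elim (c : Fin k → ℂ) (d : Fin k → ℂ))) : ℂ)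
      = inner ℂ a c + inner ℂ b d := by
  simp [toEuc, PiLp.inner_apply, Fintype.sum_sum_type]

lemma quad_re {k : ℕ} (C : Matrix (Fin k) (Fin k) ℂ) (v : EuclideanSpace ℂ (Fin k)) :
    (inner ℂ (sumLift 1 v)
        (WithLp.toLp 2 ((Matrix.fromBlocks 0 C Cᴴ 0) *ᵥ (sumLift 1 v)) : EuclideanSpace ℂ (Fin k ⊕ Fin k)) : ℂ)
      = 2 * inner ℂ v (WithLp.toLp 2 (((2 : ℂ)⁻¹ • (C + Cᴴ)) *ᵥ v) : EuclideanSpace ℂ (Fin k)) := by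
  have h0 : sumLift 1 v = toEuc (Sum.elim (v : Fin k → ℂ) (v : Fin k → ℂ)) := by
    rw [sumLift_eq, one_smul]
  have h1 : (WithLp.toLp 2 ((Matrix.fromBlocks 0 C Cᴴ 0) *ᵥ
        (toEuc (Sum.elim (v : Fin k → ℂ) (v : Fin k → ℂ)))) : EuclideanSpace ℂ (Fin k ⊕ Fin k))
      = toEuc (Sum.elim ((WithLp.toLp 2 (C *ᵥ (v : Fin k → ℂ)) : EuclideanSpace ℂ (Fin k)) : Fin k → ℂ)
          ((WithLp.toLp 2 (Cᴴ *ᵥ (v : Fin k → ℂ)) : EuclideanSpace ℂ (Fin k)) : Fin k → ℂ)) := by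
    simp [toEuc, Matrix.fromBlocks_mulVec]
  rw [h0, h1, inner_sumElim]
  rw [Matrix.smul_mulVec, Matrix.add_mulVec, WithLp.toLp_smul, WithLp.toLp_add]
  rw [inner_smul_right, inner_add_right]
  ring

lemma quad_im {k : ℕ} (C : Matrix (Fin k) (Fin k) ℂ) (v : EuclideanSpace ℂ (Fin k)) :
    (inner ℂ (sumLift Complex.I v)
        (WithLp.toLp 2 ((Matrix.fromBlocks 0 C Cᴴ 0) *ᵥ (sumLift Complex.I v)) : EuclideanSpace ℂ (Fin k ⊕ Fin k)) : ℂ)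
      = -2 * inner ℂ v (WithLp.toLp 2 (((((2 : ℂ) * Complex.I)⁻¹) • (C - Cᴴ)) *ᵥ v) : EuclideanSpace ℂ (Fin k)) := by
  have h1 : (WithLp.toLp 2 ((Matrix.fromBlocks 0 C Cᴴ 0) *ᵥ
        (toEuc (Sum.elim (v : Fin k → ℂ) ((Complex.I • v : EuclideanSpace ℂ (Fin k)) : Fin k → ℂ))))
        : EuclideanSpace ℂ (Fin k ⊕ Fin k))
      = toEuc (Sum.elim ((WithLp.toLp 2 (Complex.I • (C *ᵥ (v : Fin k → ℂ))) : EuclideanSpace ℂ (Fin k)) : Fin k → ℂ)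
          ((WithLp.toLp 2 (Cᴴ *ᵥ (v : Fin k → ℂ)) : EuclideanSpace ℂ (Fin k)) : Fin k → ℂ)) := by
    simp [toEuc, Matrix.fromBlocks_mulVec, Matrix.mulVec_smul]
  have h0 : sumLift Complex.I v
      = toEuc (Sum.elim (v : Fin k → ℂ) ((Complex.I • v : EuclideanSpace ℂ (Fin k)) : Fin k → ℂ)) := rfl
  rw [h0, h1, inner_sumElim]
  have h2 : inner ℂ v (WithLp.toLp 2 (Complex.I • (C *ᵥ (v : Fin k → ℂ))) : EuclideanSpace ℂ (Fin k))
      = Complex.I * inner ℂ v (WithLp.toLp 2 (C *ᵥ (v : Fin k → ℂ)) : EuclideanSpace ℂ (Fin k)) := by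
    rw [WithLp.toLp_smul, inner_smul_right]
  have h3 : inner ℂ (Complex.I • v) (WithLp.toLp 2 (Cᴴ *ᵥ (v : Fin k → ℂ)) : EuclideanSpace ℂ (Fin k))
      = -Complex.I * inner ℂ v (WithLp.toLp 2 (Cᴴ *ᵥ (v : Fin k → ℂ)) : EuclideanSpace ℂ (Fin k)) := by
    rw [inner_smul_left, Complex.conj_I]
  rw [h2, h3]
  rw [Matrix.smul_mulVec, Matrix.sub_mulVec, WithLp.toLp_smul, WithLp.toLp_sub]
  rw [inner_smul_right, inner_sub_right]
  field_simp
  ring_nf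
  simp [Complex.I_sq]

lemma le_count_pos_of_lift {k : ℕ} (T : Matrix (Fin k ⊕ Fin k) (Fin k ⊕ Fin k) ℂ)
    (hT : T.IsHermitian) (c : ℂ) (V : Submodule ℂ (EuclideanSpace ℂ (Fin k)))
    (hpos : ∀ v ∈ V, v ≠ 0 →
      0 < (inner ℂ (sumLift c v) (WithLp.toLp 2 (T *ᵥ (sumLift c v)) : EuclideanSpace ℂ (Fin k ⊕ Fin k)) : ℂ).re) :
    Module.finrank ℂ V ≤ (Finset.univ.filter fun i => 0 < hT.eigenvalues i).card := by
  rw [(Submodule.equivMapOfInjective (sumLift c) (sumLift_injective c) V).finrank_eq]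
  apply le_count_pos T hT
  rintro x hx hx0
  obtain ⟨v, hv, rfl⟩ := Submodule.mem_map.mp hx
  exact hpos v hv (fun h => hx0 (by rw [h, map_zero]))

lemma le_count_neg_of_lift {k : ℕ} (T : Matrix (Fin k ⊕ Fin k) (Fin k ⊕ Fin k) ℂ)
    (hT : T.IsHermitian) (c : ℂ) (V : Submodule ℂ (EuclideanSpace ℂ (Fin k)))
    (hneg : ∀ v ∈ V, v ≠ 0 →
      (inner ℂ (sumLift c v) (WithLp.toLp 2 (T *ᵥ (sumLift c v)) : EuclideanSpace ℂ (Fin k ⊕ Fin k)) : ℂ).re < 0) :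
    Module.finrank ℂ V ≤ (Finset.univ.filter fun i => hT.eigenvalues i < 0).card := by
  rw [(Submodule.equivMapOfInjective (sumLift c) (sumLift_injective c) V).finrank_eq]
  apply le_count_neg T hT
  rintro x hx hx0
  obtain ⟨v, hv, rfl⟩ := Submodule.mem_map.mp hx
  exact hneg v hv (fun h => hx0 (by rw [h, map_zero]))

end Glue

/-- For the selfadjoint block matrix `T̃ = [[0, C],[C*, 0]]`,
`rank±(T̃) ≥ max{rank±(Re C), rank±(Im C)}`. -/
theorem stmt18 {k : ℕ} (C : Matrix (Fin k) (Fin k) ℂ)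
    (hT : (Matrix.fromBlocks (0 : Matrix (Fin k) (Fin k) ℂ) C Cᴴ 0).IsHermitian)
    (hRe : ((2 : ℂ)⁻¹ • (C + Cᴴ)).IsHermitian)
    (hIm : ((((2 : ℂ) * Complex.I)⁻¹) • (C - Cᴴ)).IsHermitian) :
    max (rankPM ((2 : ℂ)⁻¹ • (C + Cᴴ)) hRe)
        (rankPM ((((2 : ℂ) * Complex.I)⁻¹) • (C - Cᴴ)) hIm) ≤
      rankPM (Matrix.fromBlocks (0 : Matrix (Fin k) (Fin k) ℂ) C Cᴴ 0) hT  := by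
  classical
  set M := (2 : ℂ)⁻¹ • (C + Cᴴ) with hM
  set N := (((2 : ℂ) * Complex.I)⁻¹) • (C - Cᴴ) with hN
  set T := Matrix.fromBlocks (0 : Matrix (Fin k) (Fin k) ℂ) C Cᴴ 0 with hTd
  have mul2re : ∀ z : ℂ, ((2 : ℂ) * z).re = 2 * z.re := by
    intro z; simp [Complex.mul_re]
  have mulm2re : ∀ z : ℂ, ((-2 : ℂ) * z).re = -2 * z.re := by
    intro z
    have : ((-2 : ℂ) * z) = -((2:ℂ) * z) := by ring
    rw [this, Complex.neg_re, mul2re]; ring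
  -- positive part via Re
  have h1 : (Finset.univ.filter fun i => 0 < hRe.eigenvalues i).card ≤
      (Finset.univ.filter fun i => 0 < hT.eigenvalues i).card := by
    rw [← finrank_span_eigen hRe.eigenvectorBasis]
    apply le_count_pos_of_lift T hT 1
    intro v hv hv0
    rw [quad_re C v, mul2re, ← hM]
    have := pos_on_span M hRe hv hv0
    linarith
  have h2 : (Finset.univ.filter fun i => hRe.eigenvalues i < 0).card ≤
      (Finset.univ.filter fun i => hT.eigenvalues i < 0).card := by
    rw [← finrank_span_eigen hRe.eigenvectorBasis]
    apply le_count_neg_of_lift T hT 1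
    intro v hv hv0
    rw [quad_re C v, mul2re, ← hM]
    have := neg_on_span M hRe hv hv0
    linarith
  have h3 : (Finset.univ.filter fun i => hIm.eigenvalues i < 0).card ≤
      (Finset.univ.filter fun i => 0 < hT.eigenvalues i).card := by
    rw [← finrank_span_eigen hIm.eigenvectorBasis]
    apply le_count_pos_of_lift T hT Complex.I
    intro v hv hv0
    rw [quad_im C v, mulm2re, ← hN]
    have := neg_on_span N hIm hv hv0
    linarith
  have h4 : (Finset.univ.filter fun i => 0 < hIm.eigenvalues i).card ≤
      (Finset.univ.filter fun i => hT.eigenvalues i < 0).card := by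
    rw [← finrank_span_eigen hIm.eigenvectorBasis]
    apply le_count_neg_of_lift T hT Complex.I
    intro v hv hv0
    rw [quad_im C v, mulm2re, ← hN]
    have := pos_on_span N hIm hv hv0
    linarith
  unfold rankPM
  apply max_le
  · exact le_min (le_trans (min_le_left _ _) h1) (le_trans (min_le_right _ _) h2)
  · exact le_min (le_trans (min_le_right _ _) h3) (le_trans (min_le_left _ _) h4)
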